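/- arXiv:2303.11365 — 2 statements merged into one kernel-verified Lean document; each statement's English description precedes it below -/
import Mathlib

section
/- (Bubble necessity.) Suppose 0 < γ < 1 and w < w_f^*, where w_f^* > 0 is the unique solution of c_y(1,G·w_f^*)/c_z(1,G·w_f^*) = G^γ. Then every equilibrium (S_t) satisfies liminf_{t→∞} G^{−t}·P_t > 0 and ∑_{t=1}^∞ r_t/P_t < ∞; that is, in every equilibrium the housing price grows at the same rate as the economy and contains a bubble (no fundamental equilibrium exists). -/
open Real Filter Set Topology

/-- Assumption C: `c` is a positive, homogeneous of degree 1, twice continuously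
differentiable function on `(0,∞)²` with partial derivatives `cy, cz > 0`, second partial
derivatives `cyy, czz < 0`, and Inada conditions. -/
structure AssumptionC (c cy cz cyy cyz czz : ℝ → ℝ → ℝ) : Prop where
  c_pos : ∀ ⦃y z : ℝ⦄, 0 < y → 0 < z → 0 < c y z
  homog : ∀ ⦃l y z : ℝ⦄, 0 < l → 0 < y → 0 < z → c (l * y) (l * z) = l * c y z
  hderiv_y : ∀ ⦃y z : ℝ⦄, 0 < y → 0 < z → HasDerivAt (fun u => c u z) (cy y z) y
  hderiv_z : ∀ ⦃y z : ℝ⦄, 0 < y → 0 < z → HasDerivAt (fun v => c y v) (cz y z) z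
  hderiv_yy : ∀ ⦃y z : ℝ⦄, 0 < y → 0 < z → HasDerivAt (fun u => cy u z) (cyy y z) y
  hderiv_yz : ∀ ⦃y z : ℝ⦄, 0 < y → 0 < z → HasDerivAt (fun v => cy y v) (cyz y z) z
  hderiv_zy : ∀ ⦃y z : ℝ⦄, 0 < y → 0 < z → HasDerivAt (fun u => cz u z) (cyz y z) y
  hderiv_zz : ∀ ⦃y z : ℝ⦄, 0 < y → 0 < z → HasDerivAt (fun v => cz y v) (czz y z) z
  cy_pos : ∀ ⦃y z : ℝ⦄, 0 < y → 0 < z → 0 < cy y z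
  cz_pos : ∀ ⦃y z : ℝ⦄, 0 < y → 0 < z → 0 < cz y z
  cyy_neg : ∀ ⦃y z : ℝ⦄, 0 < y → 0 < z → cyy y z < 0
  czz_neg : ∀ ⦃y z : ℝ⦄, 0 < y → 0 < z → czz y z < 0
  cont2 : ContinuousOn (fun p : ℝ × ℝ => (cyy p.1 p.2, cyz p.1 p.2, czz p.1 p.2))
    {p : ℝ × ℝ | 0 < p.1 ∧ 0 < p.2}
  inada_y : ∀ ⦃z : ℝ⦄, 0 < z → Tendsto (fun y => cy y z) (𝓝[>] (0:ℝ)) atTop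
  inada_z : ∀ ⦃y : ℝ⦄, 0 < y → Tendsto (fun z => cz y z) (𝓝[>] (0:ℝ)) atTop

/-- An equilibrium: `0 < S t < e1·G^t` and the difference equation
`S_{t+1}·c_z = S_t·c_y − m·c^γ` at `(y_t, z_t) = (e1·G^t − S_t, e2·G^{t+1} + S_{t+1})`. -/
def IsEquilibrium (c cy cz : ℝ → ℝ → ℝ) (e1 e2 G γ m : ℝ) (S : ℕ → ℝ) : Prop :=
  ∀ t : ℕ, 0 < S t ∧ S t < e1 * G ^ t ∧
    S (t + 1) * cz (e1 * G ^ t - S t) (e2 * G ^ (t + 1) + S (t + 1)) =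
      S t * cy (e1 * G ^ t - S t) (e2 * G ^ (t + 1) + S (t + 1)) -
        m * c (e1 * G ^ t - S t) (e2 * G ^ (t + 1) + S (t + 1)) ^ γ

/-- The rent `r_t = m·c(y_t,z_t)^γ / c_y(y_t,z_t)`. -/
noncomputable def rent (c cy : ℝ → ℝ → ℝ) (e1 e2 G γ m : ℝ) (S : ℕ → ℝ) (t : ℕ) : ℝ :=
  m * c (e1 * G ^ t - S t) (e2 * G ^ (t + 1) + S (t + 1)) ^ γ /
    cy (e1 * G ^ t - S t) (e2 * G ^ (t + 1) + S (t + 1))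

/-- The housing price `P_t = S_t − r_t`. -/
noncomputable def price (c cy : ℝ → ℝ → ℝ) (e1 e2 G γ m : ℝ) (S : ℕ → ℝ) (t : ℕ) : ℝ :=
  S t - rent c cy e1 e2 G γ m S t

/-- The gross interest rate `R_t = S_{t+1}/P_t`. -/
noncomputable def irate (c cy : ℝ → ℝ → ℝ) (e1 e2 G γ m : ℝ) (S : ℕ → ℝ) (t : ℕ) : ℝ :=
  S (t + 1) / price c cy e1 e2 G γ m S t

section Aux
variable {c cy cz cyy cyz czz : ℝ → ℝ → ℝ}

/-- `c` is strictly increasing in the first argument. -/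
lemma aux_mono_y (hC : AssumptionC c cy cz cyy cyz czz) {z : ℝ} (hz : 0 < z) :
    StrictMonoOn (fun y => c y z) (Ioi (0:ℝ)) := by
  apply strictMonoOn_of_deriv_pos (convex_Ioi 0)
  · exact fun y hy => ((hC.hderiv_y hy hz).continuousAt).continuousWithinAt
  · intro y hy
    rw [interior_Ioi] at hy
    rw [(hC.hderiv_y hy hz).deriv]
    exact hC.cy_pos hy hz

/-- `c` is strictly increasing in the second argument. -/
lemma aux_mono_z (hC : AssumptionC c cy cz cyy cyz czz) {y : ℝ} (hy : 0 < y) :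
    StrictMonoOn (fun z => c y z) (Ioi (0:ℝ)) := by
  apply strictMonoOn_of_deriv_pos (convex_Ioi 0)
  · exact fun z hz => ((hC.hderiv_z hy hz).continuousAt).continuousWithinAt
  · intro z hz
    rw [interior_Ioi] at hz
    rw [(hC.hderiv_z hy hz).deriv]
    exact hC.cz_pos hy hz

/-- two-variable monotonicity of c -/
lemma aux_mono2 (hC : AssumptionC c cy cz cyy cyz czz) {y1 y2 z1 z2 : ℝ}
    (hy1 : 0 < y1) (hy : y1 ≤ y2) (hz1 : 0 < z1) (hz : z1 ≤ z2) :
    c y1 z1 ≤ c y2 z2 := by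
  have hy2 : 0 < y2 := lt_of_lt_of_le hy1 hy
  have hz2 : 0 < z2 := lt_of_lt_of_le hz1 hz
  calc c y1 z1 ≤ c y2 z1 := (aux_mono_y hC hz1).monotoneOn hy1 hy2 hy
    _ ≤ c y2 z2 := (aux_mono_z hC hy2).monotoneOn hz1 hz2 hz

/-- `cy(·,1)` is strictly decreasing. -/
lemma aux_anti_cy (hC : AssumptionC c cy cz cyy cyz czz) :
    StrictAntiOn (fun y => cy y 1) (Ioi (0:ℝ)) := by
  apply strictAntiOn_of_deriv_neg (convex_Ioi 0)
  · exact fun y hy => ((hC.hderiv_yy hy one_pos).continuousAt).continuousWithinAt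
  · intro y hy
    rw [interior_Ioi] at hy
    rw [(hC.hderiv_yy hy one_pos).deriv]
    exact hC.cyy_neg hy one_pos

/-- `cz(1,·)` is strictly decreasing. -/
lemma aux_anti_cz (hC : AssumptionC c cy cz cyy cyz czz) :
    StrictAntiOn (fun v => cz 1 v) (Ioi (0:ℝ)) := by
  apply strictAntiOn_of_deriv_neg (convex_Ioi 0)
  · exact fun v hv => ((hC.hderiv_zz one_pos hv).continuousAt).continuousWithinAt
  · intro v hv
    rw [interior_Ioi] at hv
    rw [(hC.hderiv_zz one_pos hv).deriv]
    exact hC.czz_neg one_pos hv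

/-- `cy` is homogeneous of degree 0. -/
lemma aux_cy_deg0 (hC : AssumptionC c cy cz cyy cyz czz) {l y z : ℝ}
    (hl : 0 < l) (hy : 0 < y) (hz : 0 < z) : cy (l * y) (l * z) = cy y z := by
  have hd : HasDerivAt (fun u : ℝ => l * u) (l * 1) y := (hasDerivAt_id y).const_mul l
  have h1 : HasDerivAt (fun u => c (l * u) (l * z)) (cy (l * y) (l * z) * (l * 1)) y :=
    HasDerivAt.comp y (hC.hderiv_y (mul_pos hl hy) (mul_pos hl hz)) hd
  have h2 : HasDerivAt (fun u => l * c u z) (l * cy y z) y := (hC.hderiv_y hy hz).const_mul l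
  have h3 : (fun u => l * c u z) =ᶠ[𝓝 y] (fun u => c (l * u) (l * z)) := by
    filter_upwards [Ioi_mem_nhds hy] with u hu
    exact (hC.homog hl hu hz).symm
  have h4 := h1.congr_of_eventuallyEq h3
  have := h4.unique h2
  rw [mul_one, mul_comm] at this
  exact mul_left_cancel₀ (ne_of_gt hl) this

/-- `cz` is homogeneous of degree 0. -/
lemma aux_cz_deg0 (hC : AssumptionC c cy cz cyy cyz czz) {l y z : ℝ}
    (hl : 0 < l) (hy : 0 < y) (hz : 0 < z) : cz (l * y) (l * z) = cz y z := by
  have hd : HasDerivAt (fun v : ℝ => l * v) (l * 1) z := (hasDerivAt_id z).const_mul l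
  have h1 : HasDerivAt (fun v => c (l * y) (l * v)) (cz (l * y) (l * z) * (l * 1)) z :=
    HasDerivAt.comp z (hC.hderiv_z (mul_pos hl hy) (mul_pos hl hz)) hd
  have h2 : HasDerivAt (fun v => l * c y v) (l * cz y z) z := (hC.hderiv_z hy hz).const_mul l
  have h3 : (fun v => l * c y v) =ᶠ[𝓝 z] (fun v => c (l * y) (l * v)) := by
    filter_upwards [Ioi_mem_nhds hz] with v hv
    exact (hC.homog hl hy hv).symm
  have h4 := h1.congr_of_eventuallyEq h3
  have := h4.unique h2
  rw [mul_one, mul_comm] at this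
  exact mul_left_cancel₀ (ne_of_gt hl) this

/-- express `cy` via the ratio -/
lemma aux_cy_ratio (hC : AssumptionC c cy cz cyy cyz czz) {y z : ℝ}
    (hy : 0 < y) (hz : 0 < z) : cy y z = cy 1 (z / y) := by
  have := aux_cy_deg0 hC hy one_pos (div_pos hz hy)
  rw [mul_one, mul_div_cancel₀ _ (ne_of_gt hy)] at this
  exact this

lemma aux_cz_ratio (hC : AssumptionC c cy cz cyy cyz czz) {y z : ℝ}
    (hy : 0 < y) (hz : 0 < z) : cz y z = cz 1 (z / y) := by
  have := aux_cz_deg0 hC hy one_pos (div_pos hz hy)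
  rw [mul_one, mul_div_cancel₀ _ (ne_of_gt hy)] at this
  exact this

lemma aux_cy1_inv (hC : AssumptionC c cy cz cyy cyz czz) {ζ : ℝ} (hζ : 0 < ζ) :
    cy 1 ζ = cy ζ⁻¹ 1 := by
  have := aux_cy_deg0 hC hζ (inv_pos.mpr hζ) one_pos
  rw [mul_inv_cancel₀ (ne_of_gt hζ), mul_one] at this
  exact this

/-- `cy(1,·)` is strictly increasing. -/
lemma aux_mono_cy1 (hC : AssumptionC c cy cz cyy cyz czz) {a b : ℝ}
    (ha : 0 < a) (hab : a < b) : cy 1 a < cy 1 b := by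
  have hb : 0 < b := lt_trans ha hab
  rw [aux_cy1_inv hC ha, aux_cy1_inv hC hb]
  exact aux_anti_cy hC (mem_Ioi.mpr (inv_pos.mpr hb)) (mem_Ioi.mpr (inv_pos.mpr ha))
    (by exact inv_strictAnti₀ ha hab)

lemma aux_anti_cz1 (hC : AssumptionC c cy cz cyy cyz czz) {a b : ℝ}
    (ha : 0 < a) (hab : a ≤ b) : cz 1 b ≤ cz 1 a := by
  rcases eq_or_lt_of_le hab with rfl | h
  · exact le_rfl
  · exact le_of_lt (aux_anti_cz hC (mem_Ioi.mpr ha) (mem_Ioi.mpr (lt_trans ha h)) h)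

/-- F := cy 1 · / cz 1 · is (weakly) increasing -/
lemma aux_F_mono (hC : AssumptionC c cy cz cyy cyz czz) {a b : ℝ}
    (ha : 0 < a) (hab : a ≤ b) : cy 1 a / cz 1 a ≤ cy 1 b / cz 1 b := by
  have hb : 0 < b := lt_of_lt_of_le ha hab
  exact div_le_div₀ (le_of_lt (hC.cy_pos one_pos hb))
    (by rcases eq_or_lt_of_le hab with rfl | h
        · exact le_rfl
        · exact le_of_lt (aux_mono_cy1 hC ha h))
    (hC.cz_pos one_pos hb) (aux_anti_cz1 hC ha hab)

/-- F strict mono -/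
lemma aux_F_strictMono (hC : AssumptionC c cy cz cyy cyz czz) {a b : ℝ}
    (ha : 0 < a) (hab : a < b) : cy 1 a / cz 1 a < cy 1 b / cz 1 b := by
  have hb : 0 < b := lt_trans ha hab
  exact div_lt_div₀ (aux_mono_cy1 hC ha hab)
    (le_of_lt (aux_anti_cz hC (mem_Ioi.mpr ha) (mem_Ioi.mpr hb) hab))
    (le_of_lt (hC.cy_pos one_pos hb)) (hC.cz_pos one_pos hb)

end Aux

set_option maxHeartbeats 2000000 in
/-- Bubble necessity: if `0 < γ < 1` and `w = e2/e1 < w_f^*`, then every equilibrium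
satisfies `liminf G^{−t}·P_t > 0` and `∑_{t≥1} r_t/P_t < ∞` (every equilibrium is bubbly). -/
theorem stmt_12 (c cy cz cyy cyz czz : ℝ → ℝ → ℝ)
    (hC : AssumptionC c cy cz cyy cyz czz) (e1 e2 G γ m wf : ℝ)
    (he1 : 0 < e1) (he2 : 0 < e2) (hG : 1 < G) (hγ0 : 0 < γ) (hγ1 : γ < 1) (hm : 0 < m)
    (hwf0 : 0 < wf) (hwf : cy 1 (G * wf) / cz 1 (G * wf) = G ^ γ)
    (hw : e2 / e1 < wf)
    (S : ℕ → ℝ) (hS : IsEquilibrium c cy cz e1 e2 G γ m S) :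
    0 < liminf (fun t : ℕ => G ^ (-(t : ℝ)) * price c cy e1 e2 G γ m S t) atTop ∧
    Summable (fun t : ℕ =>
      rent c cy e1 e2 G γ m S (t + 1) / price c cy e1 e2 G γ m S (t + 1)) := by
  have hG0 : (0:ℝ) < G := lt_trans one_pos hG
  have hGt : ∀ t : ℕ, (0:ℝ) < G ^ t := fun t => pow_pos hG0 t
  have hGt1 : ∀ t : ℕ, (1:ℝ) ≤ G ^ t := fun t => one_le_pow₀ (le_of_lt hG)
  obtain ⟨w, hw_def⟩ : ∃ q : ℝ, q = e2 / e1 := ⟨_, rfl⟩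
  rw [← hw_def] at hw
  have hw0 : 0 < w := by rw [hw_def]; exact div_pos he2 he1
  obtain ⟨Y, hYt⟩ : ∃ f : ℕ → ℝ, ∀ t, f t = e1 * G ^ t - S t := ⟨_, fun _ => rfl⟩
  obtain ⟨Z, hZt⟩ : ∃ f : ℕ → ℝ, ∀ t, f t = e2 * G ^ (t+1) + S (t+1) := ⟨_, fun _ => rfl⟩
  have hGw : 0 < G * w := mul_pos hG0 hw0
  have hSpos : ∀ t, 0 < S t := fun t => (hS t).1
  have hSlt : ∀ t, S t < e1 * G ^ t := fun t => (hS t).2.1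
  have hYpos : ∀ t, 0 < Y t := fun t => by rw [hYt t]; exact sub_pos.mpr (hSlt t)
  have hZpos : ∀ t, 0 < Z t := fun t => by
    rw [hZt t]; exact add_pos (mul_pos he2 (hGt _)) (hSpos _)
  obtain ⟨ζ, hζt⟩ : ∃ f : ℕ → ℝ, ∀ t, f t = Z t / Y t := ⟨_, fun _ => rfl⟩
  have hζpos : ∀ t, 0 < ζ t := fun t => by rw [hζt t]; exact div_pos (hZpos t) (hYpos t)
  have hcyeq : ∀ t, cy (Y t) (Z t) = cy 1 (ζ t) := fun t => by
    rw [hζt t]; exact aux_cy_ratio hC (hYpos t) (hZpos t)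
  have hczeq : ∀ t, cz (Y t) (Z t) = cz 1 (ζ t) := fun t => by
    rw [hζt t]; exact aux_cz_ratio hC (hYpos t) (hZpos t)
  have heq : ∀ t, S (t+1) * cz 1 (ζ t) = S t * cy 1 (ζ t) - m * c (Y t) (Z t) ^ γ := by
    intro t
    have e := (hS t).2.2
    rw [← hYt t, ← hZt t] at e
    rw [← hcyeq t, ← hczeq t]
    exact e
  have hcyp : ∀ t, 0 < cy 1 (ζ t) := fun t => hC.cy_pos one_pos (hζpos t)
  have hczp : ∀ t, 0 < cz 1 (ζ t) := fun t => hC.cz_pos one_pos (hζpos t)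
  have hE : ∀ t : ℕ, 0 < e1 * G ^ t := fun t => mul_pos he1 (hGt t)
  obtain ⟨x, hxt⟩ : ∃ f : ℕ → ℝ, ∀ t, f t = S t / (e1 * G ^ t) := ⟨_, fun _ => rfl⟩
  have hx0 : ∀ t, 0 < x t := fun t => by rw [hxt t]; exact div_pos (hSpos t) (hE t)
  have hx1 : ∀ t, x t < 1 := fun t => by
    rw [hxt t]; exact (div_lt_one (hE t)).mpr (hSlt t)
  have hxS : ∀ t, S t = x t * (e1 * G ^ t) := fun t => by
    rw [hxt t, div_mul_cancel₀ _ (ne_of_gt (hE t))]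
  have hYx : ∀ t, Y t = (1 - x t) * (e1 * G ^ t) := by
    intro t
    rw [hYt t, hxS t]; ring
  have hZx : ∀ t, Z t = G * (w + x (t+1)) * (e1 * G ^ t) := by
    intro t
    rw [hZt t, hxS (t+1), hw_def, pow_succ]
    field_simp
  have hζx : ∀ t, ζ t = G * (w + x (t+1)) / (1 - x t) := by
    intro t
    rw [hζt t, hZx t, hYx t, mul_div_mul_right _ _ (ne_of_gt (hE t))]
  have hζgt : ∀ t, G * w < ζ t := by
    intro t
    rw [hζx t]
    have h2 : 0 < 1 - x t := by linarith [hx1 t]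
    rw [lt_div_iff₀ h2]
    have ha1 : 0 < G * x (t+1) := mul_pos hG0 (hx0 (t+1))
    have ha2 : 0 ≤ G * w * x t := mul_nonneg (le_of_lt hGw) (le_of_lt (hx0 t))
    nlinarith [ha1, ha2]
  have hζle : ∀ (t : ℕ) (a b : ℝ), x t ≤ a → a < 1 → x (t+1) ≤ b →
      ζ t ≤ G * (w + b) / (1 - a) := by
    intro t a b h1 h2 h3
    rw [hζx t]
    have hb0 : 0 < w + b := by linarith [hx0 (t+1)]
    apply div_le_div₀ (by positivity)
      (by linarith [mul_le_mul_of_nonneg_left (by linarith : w + x (t+1) ≤ w + b) (le_of_lt hG0)])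
      (by linarith) (by linarith)
  have hmc : ∀ t, 0 < m * c (Y t) (Z t) ^ γ :=
    fun t => mul_pos hm (rpow_pos_of_pos (hC.c_pos (hYpos t) (hZpos t)) γ)
  have hkey : ∀ t, x (t+1) * G < x t * (cy 1 (ζ t) / cz 1 (ζ t)) := by
    intro t
    have h1 : S (t+1) * cz 1 (ζ t) < S t * cy 1 (ζ t) := by
      rw [heq t]; linarith [hmc t]
    rw [hxS t, hxS (t+1), pow_succ] at h1
    rw [← mul_div_assoc, lt_div_iff₀ (hczp t)]
    calc x (t+1) * G * cz 1 (ζ t)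
        = (x (t+1) * (e1 * (G ^ t * G)) * cz 1 (ζ t)) / (e1 * G ^ t) := by
          field_simp
      _ < (x t * (e1 * G ^ t) * cy 1 (ζ t)) / (e1 * G ^ t) :=
          div_lt_div_of_pos_right h1 (hE t)
      _ = x t * cy 1 (ζ t) := by field_simp
  -- the fundamental interest rate is below G^γ
  have hGγ0 : (0:ℝ) < G ^ γ := rpow_pos_of_pos hG0 γ
  have hGγG : G ^ γ < G := by
    have := Real.rpow_lt_rpow_of_exponent_lt hG hγ1
    rwa [Real.rpow_one] at this
  have hFGw : cy 1 (G*w) / cz 1 (G*w) < G ^ γ := by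
    have hGwwf : G * w < G * wf := mul_lt_mul_of_pos_left hw hG0
    have h := aux_F_strictMono hC hGw hGwwf
    rwa [hwf] at h
  obtain ⟨β, hβ_def⟩ : ∃ q : ℝ, q = (cy 1 (G*w) / cz 1 (G*w) + G ^ γ) / 2 := ⟨_, rfl⟩
  have hFGw0 : 0 < cy 1 (G*w) / cz 1 (G*w) :=
    div_pos (hC.cy_pos one_pos hGw) (hC.cz_pos one_pos hGw)
  have hβ0 : 0 < β := by rw [hβ_def]; linarith
  have hβ1 : cy 1 (G*w) / cz 1 (G*w) < β := by rw [hβ_def]; linarith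
  have hβ2 : β < G ^ γ := by rw [hβ_def]; linarith
  have hβG : β < G := lt_trans hβ2 hGγG
  -- choose s
  obtain ⟨s, hs0, hs12, hsF⟩ : ∃ s : ℝ, 0 < s ∧ s < 1/2 ∧
      cy 1 (G*(w+s)/(1-s)) / cz 1 (G*(w+s)/(1-s)) < β := by
    have hg : ContinuousAt (fun s : ℝ => G*(w+s)/(1-s)) 0 := by
      apply ContinuousAt.div
      · fun_prop
      · fun_prop
      · norm_num
    have hval : G*(w+(0:ℝ))/(1-0) = G*w := by norm_num
    have hA : ContinuousAt (fun s : ℝ => cy 1 (G*(w+s)/(1-s))) 0 := by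
      refine ContinuousAt.comp ?_ hg
      show ContinuousAt (fun v => cy 1 v) (G*(w+(0:ℝ))/(1-0))
      rw [hval]; exact (hC.hderiv_yz one_pos hGw).continuousAt
    have hB : ContinuousAt (fun s : ℝ => cz 1 (G*(w+s)/(1-s))) 0 := by
      refine ContinuousAt.comp ?_ hg
      show ContinuousAt (fun v => cz 1 v) (G*(w+(0:ℝ))/(1-0))
      rw [hval]; exact (hC.hderiv_zz one_pos hGw).continuousAt
    have hne : cz 1 (G*(w+(0:ℝ))/(1-0)) ≠ 0 := by
      rw [hval]; exact ne_of_gt (hC.cz_pos one_pos hGw)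
    have hcont : ContinuousAt
        (fun s : ℝ => cy 1 (G*(w+s)/(1-s)) / cz 1 (G*(w+s)/(1-s))) 0 := hA.div hB hne
    have hlt : (fun s : ℝ => cy 1 (G*(w+s)/(1-s)) / cz 1 (G*(w+s)/(1-s))) 0 < β := by
      simp only
      rw [hval]
      exact hβ1
    have h1 : ∀ᶠ u in 𝓝 (0:ℝ),
        cy 1 (G*(w+u)/(1-u)) / cz 1 (G*(w+u)/(1-u)) < β :=
      hcont.eventually_lt_const hlt
    have h2 : ∀ᶠ u in 𝓝 (0:ℝ), u < 1/2 := by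
      have : Iio (1/2 : ℝ) ∈ 𝓝 (0:ℝ) := Iio_mem_nhds (by norm_num)
      filter_upwards [this] with u hu using hu
    have h3 : ∀ᶠ u in 𝓝[>] (0:ℝ),
        (cy 1 (G*(w+u)/(1-u)) / cz 1 (G*(w+u)/(1-u)) < β ∧ u < 1/2) ∧ 0 < u := by
      refine Eventually.and ?_ self_mem_nhdsWithin
      exact eventually_nhdsWithin_of_eventually_nhds (h1.and h2)
    obtain ⟨u, ⟨hu1, hu2⟩, hu3⟩ := h3.exists
    exact ⟨u, hu3, hu2, hu1⟩
  have hs1 : s < 1 := by linarith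
  have hζ1pos : 0 < G*(w+1)/(1-s) := by
    apply div_pos (by positivity) (by linarith)
  obtain ⟨F2, hF2_def⟩ : ∃ q : ℝ, q = cy 1 (G*(w+1)/(1-s)) / cz 1 (G*(w+1)/(1-s)) :=
    ⟨_, rfl⟩
  have hF20 : 0 < F2 := by
    rw [hF2_def]; exact div_pos (hC.cy_pos one_pos hζ1pos) (hC.cz_pos one_pos hζ1pos)
  obtain ⟨δ, hδ_def⟩ : ∃ q : ℝ, q = min s (G*s/(2*F2)) := ⟨_, rfl⟩
  have hδ0 : 0 < δ := by
    rw [hδ_def]; exact lt_min hs0 (by positivity)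
  have hδs : δ ≤ s := by rw [hδ_def]; exact min_le_left _ _
  have hδF2 : δ * F2 < G * s := by
    have h1 : δ ≤ G*s/(2*F2) := by rw [hδ_def]; exact min_le_right _ _
    have h2 : δ * F2 ≤ G*s/(2*F2)*F2 := mul_le_mul_of_nonneg_right h1 (le_of_lt hF20)
    have h3 : G*s/(2*F2)*F2 = G*s/2 := by field_simp
    have h4 : 0 < G * s := mul_pos hG0 hs0
    linarith
  have hFpos : ∀ t, 0 < cy 1 (ζ t) / cz 1 (ζ t) := fun t => div_pos (hcyp t) (hczp t)
  -- the trap step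
  have hstep : ∀ t, x t ≤ δ → x (t+1) < δ ∧ cy 1 (ζ t) / cz 1 (ζ t) ≤ β := by
    intro t hxtδ
    have hxts : x t ≤ s := le_trans hxtδ hδs
    have hx's : x (t+1) < s := by
      by_contra h
      push_neg at h
      have hb1 : ζ t ≤ G*(w+1)/(1-s) := hζle t s 1 hxts hs1 (le_of_lt (hx1 (t+1)))
      have hFb : cy 1 (ζ t)/cz 1 (ζ t) ≤ F2 := by
        rw [hF2_def]; exact aux_F_mono hC (hζpos t) hb1
      have h2 := hkey t
      have h3 : x t * (cy 1 (ζ t)/cz 1 (ζ t)) ≤ δ * F2 :=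
        mul_le_mul hxtδ hFb (le_of_lt (hFpos t)) (le_of_lt hδ0)
      have h4 : G * s ≤ G * x (t+1) := mul_le_mul_of_nonneg_left h (le_of_lt hG0)
      linarith
    have hb2 : ζ t ≤ G*(w+s)/(1-s) := hζle t s s hxts hs1 (le_of_lt hx's)
    have hFβ : cy 1 (ζ t)/cz 1 (ζ t) ≤ β :=
      le_trans (aux_F_mono hC (hζpos t) hb2) (le_of_lt hsF)
    refine ⟨?_, hFβ⟩
    have h2 := hkey t
    have h3 : x t * (cy 1 (ζ t)/cz 1 (ζ t)) ≤ δ * β :=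
      mul_le_mul hxtδ hFβ (le_of_lt (hFpos t)) (le_of_lt hδ0)
    have h5 : δ * β ≤ δ * G := mul_le_mul_of_nonneg_left (le_of_lt hβG) (le_of_lt hδ0)
    have h4 : x (t+1) * G < δ * G := by linarith
    exact lt_of_mul_lt_mul_right h4 (le_of_lt hG0)
  -- decay constants
  obtain ⟨κ, hκ_def⟩ : ∃ q : ℝ, q = c (e1/2) (e2*G) := ⟨_, rfl⟩
  have hκ0 : 0 < κ := by rw [hκ_def]; exact hC.c_pos (by positivity) (by positivity)
  have hczGw : 0 < cz 1 (G*w) := hC.cz_pos one_pos hGw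
  obtain ⟨A, hA_def⟩ : ∃ q : ℝ, q = m * κ^γ / cz 1 (G*w) := ⟨_, rfl⟩
  have hA0 : 0 < A := by
    rw [hA_def]; exact div_pos (mul_pos hm (rpow_pos_of_pos hκ0 γ)) hczGw
  have hczle : ∀ t, cz 1 (ζ t) ≤ cz 1 (G*w) := fun t =>
    le_of_lt (aux_anti_cz hC (mem_Ioi.mpr hGw) (mem_Ioi.mpr (hζpos t)) (hζgt t))
  have hdecay : ∀ t, x t ≤ δ → S (t+1) ≤ β * S t - A * (G ^ t) ^ γ := by
    intro t hxtδ
    have hFβ := (hstep t hxtδ).2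
    have hxhalf : x t ≤ 1/2 := by linarith [le_trans hxtδ hδs]
    have hYlb : G ^ t * (e1/2) ≤ Y t := by
      rw [hYx t]
      linarith [mul_le_mul_of_nonneg_right hxhalf (le_of_lt (hE t)), hE t]
    have hZlb : G ^ t * (e2*G) ≤ Z t := by
      rw [hZt t, pow_succ]
      linarith [hSpos (t+1)]
    have hclb : G ^ t * κ ≤ c (Y t) (Z t) := by
      rw [hκ_def, ← hC.homog (hGt t) (by positivity : (0:ℝ) < e1/2)
        (by positivity : (0:ℝ) < e2*G)]
      exact aux_mono2 hC (by positivity) hYlb (by positivity) hZlb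
    have hrlb : A * (G ^ t) ^ γ ≤ m * c (Y t) (Z t) ^ γ / cz 1 (ζ t) := by
      have h1 : ((G:ℝ) ^ t * κ)^γ ≤ c (Y t) (Z t) ^ γ :=
        rpow_le_rpow (by positivity) hclb (le_of_lt hγ0)
      have h2 : ((G:ℝ) ^ t * κ)^γ = (G ^ t)^γ * κ^γ :=
        mul_rpow (le_of_lt (hGt t)) (le_of_lt hκ0)
      rw [hA_def, div_mul_eq_mul_div]
      apply div_le_div₀ (le_of_lt (hmc t)) ?_ (hczp t) (hczle t)
      calc m * κ^γ * (G^t)^γ = m * ((G^t)^γ * κ^γ) := by ring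
        _ = m * ((G^t) * κ)^γ := by rw [h2]
        _ ≤ m * c (Y t) (Z t) ^ γ := mul_le_mul_of_nonneg_left h1 (le_of_lt hm)
    have hSrec : S (t+1) = S t * (cy 1 (ζ t)/cz 1 (ζ t))
        - m * c (Y t) (Z t)^γ / cz 1 (ζ t) := by
      have hne := ne_of_gt (hczp t)
      field_simp
      linarith [heq t]
    rw [hSrec]
    have h4 : S t * (cy 1 (ζ t)/cz 1 (ζ t)) ≤ β * S t := by
      rw [mul_comm β (S t)]
      exact mul_le_mul_of_nonneg_left hFβ (le_of_lt (hSpos t))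
    linarith [hrlb]
  have hGpow : ∀ t:ℕ, ((G:ℝ) ^ (t+1)) ^ γ = (G ^ t) ^ γ * G ^ γ := by
    intro t
    rw [pow_succ, mul_rpow (le_of_lt (hGt t)) (le_of_lt hG0)]
  -- no equilibrium can enter the trap
  have hnotrap : ∀ T, ¬ (x T ≤ δ) := by
    intro T hT
    have hall : ∀ n, x (T+n) ≤ δ := by
      intro n
      induction n with
      | zero => simpa using hT
      | succ k ih => exact le_of_lt (hstep (T+k) ih).1
    have hup : ∀ n : ℕ, S (T+n) / (G ^ (T+n)) ^ γ ≤ S T / (G ^ T) ^ γ - n * (A / G ^ γ) := by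
      intro n
      induction n with
      | zero => simp
      | succ k ih =>
        have hd := hdecay (T+k) (hall k)
        have hp : (0:ℝ) < ((G:ℝ) ^ (T+k)) ^ γ := rpow_pos_of_pos (hGt _) γ
        have key : S (T+k+1) / ((G:ℝ) ^ (T+k+1)) ^ γ
            ≤ S (T+k) / (G ^ (T+k)) ^ γ - A / G ^ γ := by
          rw [hGpow (T+k)]
          have hb : β * S (T+k) ≤ G ^ γ * S (T+k) :=
            mul_le_mul_of_nonneg_right (le_of_lt hβ2) (le_of_lt (hSpos (T+k)))
          have key2 : S (T+k+1) ≤ G ^ γ * S (T+k) - A * ((G:ℝ) ^ (T+k)) ^ γ := by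
            linarith
          rw [div_le_iff₀ (mul_pos hp hGγ0)]
          have hexp : (S (T+k) / ((G:ℝ) ^ (T+k)) ^ γ - A / G ^ γ)
              * (((G:ℝ) ^ (T+k)) ^ γ * G ^ γ)
              = G ^ γ * S (T+k) - A * ((G:ℝ) ^ (T+k)) ^ γ := by
            field_simp
          rw [hexp]
          exact key2
        calc S (T+(k+1)) / ((G:ℝ) ^ (T+(k+1))) ^ γ
            = S (T+k+1) / ((G:ℝ) ^ (T+k+1)) ^ γ := by norm_num [← Nat.add_assoc]
          _ ≤ S (T+k) / (G ^ (T+k)) ^ γ - A / G ^ γ := key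
          _ ≤ (S T/(G^T)^γ - k*(A/G^γ)) - A/G^γ := by linarith [ih]
          _ = S T/(G^T)^γ - (↑(k+1))*(A/G^γ) := by push_cast; ring
    obtain ⟨n, hn⟩ := exists_nat_gt ((S T / ((G:ℝ)^T)^γ) / (A / G^γ))
    have hAq : 0 < A / G^γ := div_pos hA0 hGγ0
    have h1 := hup n
    have h2 : 0 < S (T+n) / ((G:ℝ)^(T+n))^γ :=
      div_pos (hSpos _) (rpow_pos_of_pos (hGt _) γ)
    have h3 : S T/((G:ℝ)^T)^γ < n * (A/G^γ) := by
      rw [div_lt_iff₀ hAq] at hn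
      linarith
    linarith
  have hδx : ∀ t, δ < x t := fun t => not_le.mp (hnotrap t)
  -- uniform upper bound on cy 1 (ζ t)
  obtain ⟨K1, hK1_def⟩ : ∃ q : ℝ, q = c 1 (G*(w+1)) := ⟨_, rfl⟩
  have hGw1 : 0 < G*(w+1) := mul_pos hG0 (by linarith)
  have hK10 : 0 < K1 := by rw [hK1_def]; exact hC.c_pos one_pos hGw1
  have hcub : ∀ t, c (Y t) (Z t) ≤ (e1 * G ^ t) * K1 := by
    intro t
    have h1 : Y t ≤ e1 * G^t := by rw [hYt t]; linarith [hSpos t]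
    have h2 : Z t ≤ (e1 * G^t) * (G*(w+1)) := by
      rw [hZx t]
      have hxx : x (t+1) ≤ 1 := le_of_lt (hx1 (t+1))
      have hh : G * (w + x (t+1)) * (e1 * G ^ t) ≤ G * (w + 1) * (e1 * G ^ t) :=
        mul_le_mul_of_nonneg_right
          (mul_le_mul_of_nonneg_left (by linarith) (le_of_lt hG0)) (le_of_lt (hE t))
      linarith
    have h3 : c (Y t) (Z t) ≤ c (e1*G^t) ((e1*G^t)*(G*(w+1))) :=
      aux_mono2 hC (hYpos t) h1 (hZpos t) h2
    have h4 : c (e1*G^t) ((e1*G^t)*(G*(w+1))) = (e1*G^t) * K1 := by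
      rw [hK1_def]
      have h := hC.homog (hE t) one_pos hGw1
      rw [mul_one] at h
      exact h
    linarith
  obtain ⟨M, hM_def⟩ : ∃ q : ℝ, q = m * (e1*K1)^γ := ⟨_, rfl⟩
  have hM0 : 0 < M := by
    rw [hM_def]; exact mul_pos hm (rpow_pos_of_pos (by positivity) γ)
  have hmcub : ∀ t, m * c (Y t) (Z t) ^ γ ≤ M * ((G:ℝ)^t)^γ := by
    intro t
    have h1 : c (Y t) (Z t) ^ γ ≤ ((e1*G^t)*K1)^γ :=
      rpow_le_rpow (le_of_lt (hC.c_pos (hYpos t) (hZpos t))) (hcub t) (le_of_lt hγ0)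
    have h2 : ((e1*G^t)*K1)^γ = (e1*K1)^γ * ((G:ℝ)^t)^γ := by
      rw [show (e1*G^t)*K1 = (e1*K1)*(G^t) by ring,
        mul_rpow (by positivity) (le_of_lt (hGt t))]
    calc m * c (Y t) (Z t) ^ γ ≤ m * ((e1*K1)^γ * ((G:ℝ)^t)^γ) := by
          rw [← h2]; exact mul_le_mul_of_nonneg_left h1 (le_of_lt hm)
      _ = M * ((G:ℝ)^t)^γ := by rw [hM_def]; ring
  have hmcub' : ∀ t, m * c (Y t) (Z t) ^ γ ≤ M * G^t := by
    intro t
    have h3 : ((G:ℝ)^t)^γ ≤ G^t := by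
      calc ((G:ℝ)^t)^γ ≤ ((G:ℝ)^t)^(1:ℝ) :=
            rpow_le_rpow_of_exponent_le (hGt1 t) (le_of_lt hγ1)
        _ = G^t := rpow_one _
    calc m * c (Y t) (Z t) ^ γ ≤ M * ((G:ℝ)^t)^γ := hmcub t
      _ ≤ M * G^t := mul_le_mul_of_nonneg_left h3 (le_of_lt hM0)
  obtain ⟨B, hB_def⟩ : ∃ q : ℝ, q = (e1*G*cz 1 (G*w) + M)/(δ*e1) := ⟨_, rfl⟩
  have hB0 : 0 < B := by
    rw [hB_def]
    exact div_pos (add_pos (mul_pos (mul_pos he1 hG0) hczGw) hM0) (by positivity)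
  have hcyub : ∀ t, cy 1 (ζ t) ≤ B := by
    intro t
    have h1 : S t * cy 1 (ζ t) = S (t+1) * cz 1 (ζ t) + m * c (Y t) (Z t)^γ := by
      linarith [heq t]
    have h2 : S (t+1) * cz 1 (ζ t) ≤ (e1*G*G^t) * cz 1 (G*w) := by
      have ha : S (t+1) ≤ e1*G*G^t := by
        have hb := hSlt (t+1); rw [pow_succ] at hb; linarith
      exact mul_le_mul ha (hczle t) (le_of_lt (hczp t)) (by positivity)
    have h4 : S t * cy 1 (ζ t) ≤ (e1*G*cz 1 (G*w) + M) * G^t := by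
      have h5 := hmcub' t
      linarith
    have h5 : δ*e1*G^t < S t := by
      have h := mul_lt_mul_of_pos_right (hδx t) (hE t)
      rw [← hxS t] at h
      linarith
    rw [hB_def, le_div_iff₀ (by positivity)]
    have h6 : δ*e1*G^t*cy 1 (ζ t) ≤ (e1*G*cz 1 (G*w) + M) * G^t := by
      linarith [mul_lt_mul_of_pos_right h5 (hcyp t)]
    have h7 : cy 1 (ζ t) * (δ*e1) * G^t ≤ (e1*G*cz 1 (G*w) + M) * G^t := by
      linarith [h6]
    exact le_of_mul_le_mul_right h7 (hGt t)
  -- Inada: ζ is bounded above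
  obtain ⟨η, hη0, hη⟩ : ∃ η, 0 < η ∧ ∀ u : ℝ, 0 < u → u < η → B < cy u 1 := by
    have h1 : ∀ᶠ u in 𝓝[>] (0:ℝ), B < cy u 1 :=
      (hC.inada_y one_pos).eventually_gt_atTop B
    rw [eventually_nhdsWithin_iff, Metric.eventually_nhds_iff] at h1
    obtain ⟨ε, hε0, hε⟩ := h1
    refine ⟨ε, hε0, fun u hu0 huε => hε ?_ (mem_Ioi.mpr hu0)⟩
    rw [Real.dist_eq, sub_zero, abs_of_pos hu0]
    exact huε
  have hζub : ∀ t, ζ t ≤ η⁻¹ := by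
    intro t
    by_contra h
    push_neg at h
    have h1 : (ζ t)⁻¹ < η := by
      have h2 := inv_strictAnti₀ (inv_pos.mpr hη0) h
      rwa [inv_inv] at h2
    have h2 := hη (ζ t)⁻¹ (inv_pos.mpr (hζpos t)) h1
    rw [← aux_cy1_inv hC (hζpos t)] at h2
    exact absurd (hcyub t) (not_le.mpr h2)
  -- final uniform bounds
  have hηinv : (0:ℝ) < η⁻¹ := inv_pos.mpr hη0
  have hczm0 : 0 < cz 1 η⁻¹ := hC.cz_pos one_pos hηinv
  have hczlb : ∀ t, cz 1 η⁻¹ ≤ cz 1 (ζ t) := fun t => aux_anti_cz1 hC (hζpos t) (hζub t)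
  have hcym0 : 0 < cy 1 (G*w) := hC.cy_pos one_pos hGw
  have hcylb : ∀ t, cy 1 (G*w) ≤ cy 1 (ζ t) := fun t =>
    le_of_lt (aux_mono_cy1 hC hGw (hζgt t))
  have hrent : ∀ t, rent c cy e1 e2 G γ m S t = m * c (Y t) (Z t)^γ / cy 1 (ζ t) := by
    intro t
    simp only [rent]
    rw [← hYt t, ← hZt t, hcyeq t]
  have hrpos : ∀ t, 0 < rent c cy e1 e2 G γ m S t := by
    intro t; rw [hrent t]; exact div_pos (hmc t) (hcyp t)
  have hprice : ∀ t, price c cy e1 e2 G γ m S t = S (t+1) * cz 1 (ζ t) / cy 1 (ζ t) := by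
    intro t
    simp only [price]
    rw [hrent t, eq_div_iff (ne_of_gt (hcyp t))]
    have hne := ne_of_gt (hcyp t)
    field_simp
    linarith [heq t]
  have hppos : ∀ t, 0 < price c cy e1 e2 G γ m S t := by
    intro t; rw [hprice t]
    exact div_pos (mul_pos (hSpos (t+1)) (hczp t)) (hcyp t)
  obtain ⟨Kp, hKp_def⟩ : ∃ q : ℝ, q = δ*e1*G*cz 1 η⁻¹/B := ⟨_, rfl⟩
  have hKp0 : 0 < Kp := by
    rw [hKp_def]
    exact div_pos (mul_pos (mul_pos (mul_pos hδ0 he1) hG0) hczm0) hB0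
  have hPlb : ∀ t, Kp * G^t ≤ price c cy e1 e2 G γ m S t := by
    intro t
    have h1 : δ*(e1*(G^t*G)) ≤ S (t+1) := by
      have h := mul_lt_mul_of_pos_right (hδx (t+1)) (hE (t+1))
      rw [← hxS (t+1)] at h
      rw [pow_succ] at h
      linarith
    have h2 : δ*e1*G*cz 1 η⁻¹*G^t ≤ S (t+1) * cz 1 (ζ t) := by
      have h3 : δ*(e1*(G^t*G)) * cz 1 η⁻¹ ≤ S (t+1) * cz 1 (ζ t) :=
        mul_le_mul h1 (hczlb t) (le_of_lt hczm0) (le_of_lt (hSpos (t+1)))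
      linarith
    rw [hprice t, hKp_def, div_mul_eq_mul_div, div_le_div_iff₀ hB0 (hcyp t)]
    have h3 : δ*e1*G*cz 1 η⁻¹*G^t * cy 1 (ζ t) ≤ S (t+1) * cz 1 (ζ t) * B :=
      mul_le_mul h2 (hcyub t) (le_of_lt (hcyp t))
        (mul_nonneg (le_of_lt (hSpos (t+1))) (le_of_lt (hczp t)))
    linarith
  have hrwpow : ∀ t : ℕ, G ^ (-(t:ℝ)) = ((G:ℝ)^t)⁻¹ := by
    intro t
    rw [Real.rpow_neg (le_of_lt hG0), Real.rpow_natCast]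
  constructor
  · have hub : ∀ t : ℕ, G ^ (-(t:ℝ)) * price c cy e1 e2 G γ m S t ≤ e1 := by
      intro t
      rw [hrwpow t, inv_mul_eq_div, div_le_iff₀ (hGt t)]
      have h1 : price c cy e1 e2 G γ m S t < S t := by
        have h2 := hrpos t
        simp only [price]
        linarith
      have h3 := hSlt t
      linarith
    have hlb : ∀ t : ℕ, Kp ≤ G ^ (-(t:ℝ)) * price c cy e1 e2 G γ m S t := by
      intro t
      rw [hrwpow t, inv_mul_eq_div, le_div_iff₀ (hGt t)]
      linarith [hPlb t]
    have hbdd : IsBoundedUnder (· ≤ ·) atTop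
        (fun t : ℕ => G ^ (-(t:ℝ)) * price c cy e1 e2 G γ m S t) :=
      isBoundedUnder_of ⟨e1, hub⟩
    have hcob := hbdd.isCoboundedUnder_ge
    calc (0:ℝ) < Kp := hKp0
      _ ≤ _ := le_liminf_of_le hcob (Eventually.of_forall hlb)
  · obtain ⟨q, hq_def⟩ : ∃ u : ℝ, u = G^(γ-1) := ⟨_, rfl⟩
    have hq0 : 0 < q := by rw [hq_def]; exact rpow_pos_of_pos hG0 _
    have hq1 : q < 1 := by
      rw [hq_def]; exact rpow_lt_one_of_one_lt_of_neg hG (by linarith)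
    have hqt : ∀ t : ℕ, ((G:ℝ)^t)^(γ-1) = q^t := by
      intro t
      rw [hq_def, ← Real.rpow_natCast G t, ← Real.rpow_mul (le_of_lt hG0),
        mul_comm, Real.rpow_mul (le_of_lt hG0), Real.rpow_natCast]
    have hterm : ∀ t : ℕ, rent c cy e1 e2 G γ m S t / price c cy e1 e2 G γ m S t
        ≤ (M / cy 1 (G*w) / Kp) * q^t := by
      intro t
      have hrub : rent c cy e1 e2 G γ m S t ≤ M * ((G:ℝ)^t)^γ / cy 1 (G*w) := by
        rw [hrent t]
        exact div_le_div₀ (by positivity) (hmcub t) hcym0 (hcylb t)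
      have h1 : rent c cy e1 e2 G γ m S t / price c cy e1 e2 G γ m S t
          ≤ (M*((G:ℝ)^t)^γ/cy 1 (G*w)) / (Kp * G^t) :=
        div_le_div₀ (by positivity) hrub (mul_pos hKp0 (hGt t)) (hPlb t)
      have h2 : (M*((G:ℝ)^t)^γ/cy 1 (G*w)) / (Kp * G^t)
          = (M / cy 1 (G*w) / Kp) * (((G:ℝ)^t)^γ / G^t) := by
        field_simp
      have h3 : ((G:ℝ)^t)^γ / G^t = q^t := by
        rw [← hqt t, Real.rpow_sub (hGt t), Real.rpow_one]
      rw [h2, h3] at h1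
      exact h1
    have hgeo : Summable (fun t : ℕ => (M / cy 1 (G*w) / Kp) * q^(t+1)) := by
      have hgeo0 : Summable (fun t : ℕ => q^t) :=
        summable_geometric_of_lt_one (le_of_lt hq0) hq1
      have hgeo1 := hgeo0.mul_left ((M / cy 1 (G*w) / Kp) * q)
      exact hgeo1.congr (fun t => by rw [pow_succ]; ring)
    apply Summable.of_nonneg_of_le
      (fun t => div_nonneg (le_of_lt (hrpos (t+1))) (le_of_lt (hppos (t+1))))
      (fun t => hterm (t+1)) hgeo
end

section
/- (Asymptotics of the bubbly long run equilibrium.) Suppose 0 < γ < 1 and w < w_b^*, where w_b^* > 0 is the unique solution of c_y(1,G·w_b^*)/c_z(1,G·w_b^*) = G; let s* := (w_b^* − w)/(w_b^* + 1) ∈ (0,1) and (y*,z*) := (1−s*, G·(w+s*)). If (S_t) is an equilibrium with S_t/(e1·G^t) → s*, then: r_t/(e1^γ·G^{γ·t}) → m·c(y*,z*)^γ/c_y(y*,z*); P_t/(e1·G^t) → s*; R_t → G; the price-rent ratio P_t/r_t diverges to ∞; and ∑_{t=1}^∞ r_t/P_t < ∞, so the housing price contains a bubble. -/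
open Real Filter Set Topology

lemma cy_homog {c cy cz cyy cyz czz : ℝ → ℝ → ℝ}
    (hC : AssumptionC c cy cz cyy cyz czz) {l y z : ℝ} (hl : 0 < l) (hy : 0 < y) (hz : 0 < z) :
    cy (l * y) (l * z) = cy y z := by
  have h1 : HasDerivAt (fun u => c (l * u) (l * z)) (cy (l * y) (l * z) * l) y := by
    have := (hC.hderiv_y (mul_pos hl hy) (mul_pos hl hz)).comp y
      ((hasDerivAt_id y).const_mul l)
    simpa [Function.comp_def] using this
  have h3 : HasDerivAt (fun u => l * c u z) (l * cy y z) y :=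
    (hC.hderiv_y hy hz).const_mul l
  have h2 : HasDerivAt (fun u => c (l * u) (l * z)) (l * cy y z) y := by
    refine h3.congr_of_eventuallyEq ?_
    filter_upwards [Ioi_mem_nhds hy] with u hu
    exact hC.homog hl hu hz
  have h4 : l * cy y z = cy (l * y) (l * z) * l := h2.unique h1
  have h5 : l * cy y z = l * cy (l * y) (l * z) := h4.trans (mul_comm _ _)
  exact (mul_left_cancel₀ hl.ne' h5).symm

lemma ratio_helper {X Y A E C : ℝ} (hA : A ≠ 0) (hE : E ≠ 0) (hY : Y ≠ 0) (h : A * C = E) :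
    X / Y = X / E / (Y / A) * C := by
  have hC : C ≠ 0 := by
    intro h0
    rw [h0, mul_zero] at h
    exact hE h.symm
  subst h
  field_simp

/-- Asymptotics of the bubbly long run equilibrium: if `0 < γ < 1`, `w = e2/e1 < w_b^*`,
`s* = (w_b^* − w)/(w_b^* + 1)` and `(S_t)` is an equilibrium with `S_t/(e1·G^t) → s*`,
then `s* ∈ (0,1)`, `r_t/(e1^γ·G^{γt}) → m·c(y*,z*)^γ/c_y(y*,z*)`, `P_t/(e1·G^t) → s*`,
`R_t → G`, the price-rent ratio diverges, and `∑ r_t/P_t < ∞` (a bubble). -/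
theorem stmt_14 (c cy cz cyy cyz czz : ℝ → ℝ → ℝ)
    (hC : AssumptionC c cy cz cyy cyz czz) (e1 e2 G γ m wb s ys zs : ℝ)
    (he1 : 0 < e1) (he2 : 0 < e2) (hG : 1 < G) (hγ0 : 0 < γ) (hγ1 : γ < 1) (hm : 0 < m)
    (hwb0 : 0 < wb) (hwb : cy 1 (G * wb) / cz 1 (G * wb) = G)
    (hw : e2 / e1 < wb)
    (hs : s = (wb - e2 / e1) / (wb + 1)) (hys : ys = 1 - s) (hzs : zs = G * (e2 / e1 + s))
    (S : ℕ → ℝ) (hS : IsEquilibrium c cy cz e1 e2 G γ m S)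
    (hconv : Tendsto (fun t : ℕ => S t / (e1 * G ^ t)) atTop (𝓝 s)) :
    s ∈ Ioo (0:ℝ) 1 ∧
    Tendsto (fun t : ℕ => rent c cy e1 e2 G γ m S t / (e1 ^ γ * G ^ (γ * (t : ℝ))))
      atTop (𝓝 (m * c ys zs ^ γ / cy ys zs)) ∧
    Tendsto (fun t : ℕ => price c cy e1 e2 G γ m S t / (e1 * G ^ t)) atTop (𝓝 s) ∧
    Tendsto (fun t : ℕ => irate c cy e1 e2 G γ m S t) atTop (𝓝 G) ∧
    Tendsto (fun t : ℕ => price c cy e1 e2 G γ m S t / rent c cy e1 e2 G γ m S t)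
      atTop atTop ∧
    Summable (fun t : ℕ =>
      rent c cy e1 e2 G γ m S (t + 1) / price c cy e1 e2 G γ m S (t + 1)) := by
  have hG0 : (0:ℝ) < G := lt_trans one_pos hG
  have hw0 : 0 < e2 / e1 := div_pos he2 he1
  have hs0 : 0 < s := by rw [hs]; exact div_pos (by linarith) (by linarith)
  have hs1 : s < 1 := by rw [hs, div_lt_one (by linarith)]; linarith
  have hys0 : 0 < ys := by rw [hys]; linarith
  have hzs0 : 0 < zs := by rw [hzs]; exact mul_pos hG0 (by linarith)
  have hE : ∀ t : ℕ, (0:ℝ) < e1 * G ^ t := fun t => mul_pos he1 (pow_pos hG0 t)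
  set a : ℕ → ℝ := fun t => 1 - S t / (e1 * G ^ t) with ha_def
  set b : ℕ → ℝ := fun t => G * (e2 / e1) + G * (S (t+1) / (e1 * G ^ (t+1))) with hb_def
  have ha_pos : ∀ t, 0 < a t := by
    intro t
    simp only [ha_def]
    rw [sub_pos, div_lt_one (hE t)]
    exact (hS t).2.1
  have hb_pos : ∀ t, 0 < b t := by
    intro t
    exact add_pos (mul_pos hG0 hw0) (mul_pos hG0 (div_pos (hS (t+1)).1 (hE (t+1))))
  have hya : ∀ t, e1 * G ^ t - S t = (e1 * G ^ t) * a t := by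
    intro t
    simp only [ha_def]
    field_simp
  have hzb : ∀ t, e2 * G ^ (t+1) + S (t+1) = (e1 * G ^ t) * b t := by
    intro t
    simp only [hb_def]
    field_simp
    ring
  have hSlim1 : Tendsto (fun t => S (t+1) / (e1 * G ^ (t+1))) atTop (𝓝 s) :=
    hconv.comp (tendsto_add_atTop_nat 1)
  have ha_lim : Tendsto a atTop (𝓝 ys) := by
    rw [hys]; exact tendsto_const_nhds.sub hconv
  have hb_lim : Tendsto b atTop (𝓝 zs) := by
    have hz' : zs = G * (e2/e1) + G * s := by rw [hzs]; ring
    rw [hz']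
    exact tendsto_const_nhds.add (hSlim1.const_mul G)
  have hdiv : Tendsto (fun t => a t / b t) atTop (𝓝 (ys / zs)) :=
    ha_lim.div hb_lim hzs0.ne'
  -- continuity of c along (a,b)
  have keyc : ∀ y z : ℝ, 0 < y → 0 < z → c y z = z * c (y / z) 1 := by
    intro y z hy hz
    have h2 : z * (y/z) = y := by field_simp
    have h := hC.homog hz (div_pos hy hz) one_pos
    rw [h2, mul_one] at h
    exact h
  have hcont_c : Tendsto (fun t => c (a t) (b t)) atTop (𝓝 (c ys zs)) := by
    have huc : ContinuousAt (fun u => c u 1) (ys / zs) :=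
      (hC.hderiv_y (div_pos hys0 hzs0) one_pos).continuousAt
    have h : Tendsto (fun t => b t * c (a t / b t) 1) atTop (𝓝 (zs * c (ys/zs) 1)) :=
      hb_lim.mul (huc.tendsto.comp hdiv)
    rw [keyc ys zs hys0 hzs0]
    exact h.congr (fun t => (keyc (a t) (b t) (ha_pos t) (hb_pos t)).symm)
  have keycy : ∀ y z : ℝ, 0 < y → 0 < z → cy y z = cy (y / z) 1 := by
    intro y z hy hz
    have h2 : z * (y/z) = y := by field_simp
    have h := cy_homog hC hz (div_pos hy hz) one_pos
    rw [h2, mul_one] at h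
    exact h
  have hcont_cy : Tendsto (fun t => cy (a t) (b t)) atTop (𝓝 (cy ys zs)) := by
    have huc : ContinuousAt (fun u => cy u 1) (ys / zs) :=
      (hC.hderiv_yy (div_pos hys0 hzs0) one_pos).continuousAt
    rw [keycy ys zs hys0 hzs0]
    exact (huc.tendsto.comp hdiv).congr (fun t => (keycy _ _ (ha_pos t) (hb_pos t)).symm)
  -- pointwise positivity
  have hyt : ∀ t, 0 < e1 * G ^ t - S t := fun t => sub_pos.mpr (hS t).2.1
  have hzt : ∀ t, 0 < e2 * G ^ (t+1) + S (t+1) :=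
    fun t => add_pos (mul_pos he2 (pow_pos hG0 _)) (hS (t+1)).1
  have hrent_pos : ∀ t, 0 < rent c cy e1 e2 G γ m S t := by
    intro t
    unfold rent
    exact div_pos (mul_pos hm (rpow_pos_of_pos (hC.c_pos (hyt t) (hzt t)) γ))
      (hC.cy_pos (hyt t) (hzt t))
  have hprice_pos : ∀ t, 0 < price c cy e1 e2 G γ m S t := by
    intro t
    have heq := (hS t).2.2
    have hcy0 := hC.cy_pos (hyt t) (hzt t)
    have key : price c cy e1 e2 G γ m S t
        = S (t+1) * cz (e1*G^t - S t) (e2*G^(t+1)+S (t+1)) /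
            cy (e1*G^t - S t) (e2*G^(t+1)+S (t+1)) := by
      unfold price rent
      rw [heq]
      field_simp
      try ring
    rw [key]
    exact div_pos (mul_pos (hS (t+1)).1 (hC.cz_pos (hyt t) (hzt t))) hcy0
  -- rewrite rent in normalized form
  have hA_pos : ∀ t : ℕ, (0:ℝ) < e1 ^ γ * G ^ (γ * (t:ℝ)) :=
    fun t => mul_pos (rpow_pos_of_pos he1 γ) (rpow_pos_of_pos hG0 _)
  have hpow : ∀ (p : ℝ) (t : ℕ), G ^ (p * (t:ℝ)) = ((G:ℝ) ^ p) ^ t := by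
    intro p t
    rw [Real.rpow_mul hG0.le, Real.rpow_natCast]
  have hrent_eq : ∀ t, rent c cy e1 e2 G γ m S t
      = (e1 ^ γ * G ^ (γ * (t:ℝ))) * (m * c (a t) (b t) ^ γ / cy (a t) (b t)) := by
    intro t
    unfold rent
    rw [hya t, hzb t, hC.homog (hE t) (ha_pos t) (hb_pos t),
        cy_homog hC (hE t) (ha_pos t) (hb_pos t),
        Real.mul_rpow (hE t).le (hC.c_pos (ha_pos t) (hb_pos t)).le]
    have hX : (e1 * G ^ t) ^ γ = e1 ^ γ * G ^ (γ * (t:ℝ)) := by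
      rw [Real.mul_rpow he1.le (pow_pos hG0 t).le, ← Real.rpow_natCast G t,
        ← Real.rpow_mul hG0.le, mul_comm (t:ℝ) γ]
    rw [hX]
    ring
  have hQlim : Tendsto (fun t => m * c (a t) (b t) ^ γ / cy (a t) (b t)) atTop
      (𝓝 (m * c ys zs ^ γ / cy ys zs)) :=
    Tendsto.div (tendsto_const_nhds.mul (hcont_c.rpow_const (Or.inr hγ0.le))) hcont_cy
      (hC.cy_pos hys0 hzs0).ne'
  have hL : 0 < m * c ys zs ^ γ / cy ys zs :=
    div_pos (mul_pos hm (rpow_pos_of_pos (hC.c_pos hys0 hzs0) γ)) (hC.cy_pos hys0 hzs0)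
  have hconc2 : Tendsto (fun t : ℕ => rent c cy e1 e2 G γ m S t / (e1 ^ γ * G ^ (γ * (t:ℝ))))
      atTop (𝓝 (m * c ys zs ^ γ / cy ys zs)) := by
    refine hQlim.congr (fun t => ?_)
    rw [hrent_eq t, mul_div_cancel_left₀ _ (hA_pos t).ne']
  -- geometric factors
  have hρ1 : G ^ (γ - 1) < 1 := Real.rpow_lt_one_of_one_lt_of_neg hG (by linarith)
  have hρ0 : (0:ℝ) < G ^ (γ - 1) := rpow_pos_of_pos hG0 _
  have hrpadd : ∀ x : ℝ, 0 < x → ∀ p : ℝ, x ^ p * x = x ^ (p + 1) := by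
    intro x hx p
    nth_rewrite 2 [← Real.rpow_one x]
    rw [← Real.rpow_add hx]
  have hAB : ∀ t : ℕ, (e1 ^ (γ-1) * (G ^ (γ-1)) ^ t) * (e1 * G ^ t)
      = e1 ^ γ * G ^ (γ * (t:ℝ)) := by
    intro t
    have h1 : e1 ^ (γ-1) * e1 = e1 ^ γ := by
      rw [hrpadd e1 he1 (γ-1)]; norm_num
    have h3 : G ^ (γ-1) * G = G ^ γ := by
      rw [hrpadd G hG0 (γ-1)]; norm_num
    have h2 : ((G ^ (γ-1) : ℝ) ^ t) * G ^ t = G ^ (γ * (t:ℝ)) := by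
      rw [← mul_pow, h3, ← hpow]
    calc (e1 ^ (γ-1) * (G ^ (γ-1)) ^ t) * (e1 * G ^ t)
        = (e1 ^ (γ-1) * e1) * (((G ^ (γ-1) : ℝ) ^ t) * G ^ t) := by ring
      _ = e1 ^ γ * G ^ (γ * (t:ℝ)) := by rw [h1, h2]
  have hB_lim : Tendsto (fun t : ℕ => e1 ^ (γ-1) * (G ^ (γ-1)) ^ t) atTop (𝓝 0) := by
    have h := (tendsto_pow_atTop_nhds_zero_of_lt_one hρ0.le hρ1).const_mul (e1 ^ (γ-1))
    simpa using h
  have hB_pos : ∀ t : ℕ, (0:ℝ) < e1 ^ (γ-1) * (G ^ (γ-1)) ^ t :=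
    fun t => mul_pos (rpow_pos_of_pos he1 _) (pow_pos hρ0 t)
  have hrent_over : Tendsto (fun t : ℕ => rent c cy e1 e2 G γ m S t / (e1 * G ^ t))
      atTop (𝓝 0) := by
    have hid : ∀ t : ℕ, rent c cy e1 e2 G γ m S t / (e1 * G ^ t)
        = (m * c (a t) (b t) ^ γ / cy (a t) (b t)) * (e1 ^ (γ-1) * (G ^ (γ-1)) ^ t) := by
      intro t
      rw [hrent_eq t, ← hAB t, mul_comm (e1 ^ (γ-1) * (G ^ (γ-1)) ^ t) (e1 * G ^ t),
        mul_assoc, mul_div_cancel_left₀ _ (hE t).ne']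
      ring
    have h := hQlim.mul hB_lim
    rw [mul_zero] at h
    exact h.congr (fun t => (hid t).symm)
  have hconc3 : Tendsto (fun t : ℕ => price c cy e1 e2 G γ m S t / (e1 * G ^ t))
      atTop (𝓝 s) := by
    have h := hconv.sub hrent_over
    rw [sub_zero] at h
    refine h.congr (fun t => ?_)
    unfold price
    rw [sub_div]
  -- interest rate
  have hconc4 : Tendsto (fun t : ℕ => irate c cy e1 e2 G γ m S t) atTop (𝓝 G) := by
    have hid : ∀ t, irate c cy e1 e2 G γ m S t
        = (S (t+1)/(e1*G^(t+1))) / (price c cy e1 e2 G γ m S t/(e1*G^(t+1))) := by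
      intro t
      have h := ratio_helper (X := S (t+1)) (Y := price c cy e1 e2 G γ m S t)
        (A := e1*G^(t+1)) (E := e1*G^(t+1)) (C := 1)
        (hE (t+1)).ne' (hE (t+1)).ne' (hprice_pos t).ne' (mul_one _)
      unfold irate
      simpa using h
    have hden : Tendsto (fun t : ℕ => price c cy e1 e2 G γ m S t/(e1*G^(t+1)))
        atTop (𝓝 (s / G)) := by
      refine (hconc3.div_const G).congr (fun t => ?_)
      rw [div_div, mul_assoc, ← pow_succ]
    have h := hSlim1.div hden (div_pos hs0 hG0).ne'
    have hsg : s / (s / G) = G := by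
      rw [div_div_eq_mul_div, mul_comm, mul_div_assoc, div_self hs0.ne', mul_one]
    rw [hsg] at h
    exact h.congr (fun t => (hid t).symm)
  -- price-rent ratio
  have hσ : 1 < G ^ (1 - γ) :=
    (Real.one_lt_rpow_iff_of_pos hG0).mpr (Or.inl ⟨hG, by linarith⟩)
  have hAC : ∀ t : ℕ, (e1 ^ γ * G ^ (γ * (t:ℝ))) * (e1 ^ (1-γ) * (G ^ (1-γ)) ^ t)
      = e1 * G ^ t := by
    intro t
    have h1 : e1 ^ γ * e1 ^ (1-γ) = e1 := by
      rw [← Real.rpow_add he1]; norm_num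
    have h3 : G ^ γ * G ^ (1-γ) = G := by
      rw [← Real.rpow_add hG0]; norm_num
    have h2 : G ^ (γ * (t:ℝ)) * ((G ^ (1-γ) : ℝ) ^ t) = G ^ t := by
      rw [hpow γ t, ← mul_pow, h3]
    calc (e1 ^ γ * G ^ (γ * (t:ℝ))) * (e1 ^ (1-γ) * (G ^ (1-γ)) ^ t)
        = (e1 ^ γ * e1 ^ (1-γ)) * (G ^ (γ * (t:ℝ)) * ((G ^ (1-γ) : ℝ) ^ t)) := by ring
      _ = e1 * G ^ t := by rw [h1, h2]
  have hconc5 : Tendsto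
      (fun t : ℕ => price c cy e1 e2 G γ m S t / rent c cy e1 e2 G γ m S t)
      atTop atTop := by
    have hid : ∀ t : ℕ, price c cy e1 e2 G γ m S t / rent c cy e1 e2 G γ m S t
        = ((price c cy e1 e2 G γ m S t/(e1*G^t)) /
            (rent c cy e1 e2 G γ m S t/(e1 ^ γ * G ^ (γ * (t:ℝ))))) *
          (e1 ^ (1-γ) * (G ^ (1-γ)) ^ t) :=
      fun t => ratio_helper (hA_pos t).ne' (hE t).ne' (hrent_pos t).ne' (hAC t)
    have hfrac := hconc3.div hconc2 hL.ne'
    have hgeo : Tendsto (fun t : ℕ => e1 ^ (1-γ) * ((G ^ (1-γ) : ℝ)) ^ t) atTop atTop :=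
      (tendsto_pow_atTop_atTop_of_one_lt hσ).const_mul_atTop (rpow_pos_of_pos he1 _)
    have h := hfrac.pos_mul_atTop (div_pos hs0 hL) hgeo
    exact h.congr (fun t => (hid t).symm)
  -- summability
  have hsum : Summable (fun t : ℕ =>
      rent c cy e1 e2 G γ m S (t + 1) / price c cy e1 e2 G γ m S (t + 1)) := by
    have hid : ∀ t : ℕ, rent c cy e1 e2 G γ m S t / price c cy e1 e2 G γ m S t
        = ((rent c cy e1 e2 G γ m S t/(e1 ^ γ * G ^ (γ * (t:ℝ)))) /
            (price c cy e1 e2 G γ m S t/(e1*G^t))) * (e1 ^ (γ-1) * (G ^ (γ-1)) ^ t) := by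
      intro t
      refine ratio_helper (hE t).ne' (hA_pos t).ne' (hprice_pos t).ne' ?_
      rw [mul_comm]
      exact hAB t
    have hg : Tendsto (fun t : ℕ => (rent c cy e1 e2 G γ m S t/(e1 ^ γ * G ^ (γ * (t:ℝ)))) /
        (price c cy e1 e2 G γ m S t/(e1*G^t))) atTop
        (𝓝 ((m * c ys zs ^ γ / cy ys zs) / s)) := hconc2.div hconc3 hs0.ne'
    have hbdd : BddAbove (Set.range (fun t : ℕ =>
        (rent c cy e1 e2 G γ m S t/(e1 ^ γ * G ^ (γ * (t:ℝ)))) /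
        (price c cy e1 e2 G γ m S t/(e1*G^t)))) := hg.bddAbove_range
    obtain ⟨Cb, hCb⟩ := hbdd
    have hCb' : ∀ t : ℕ, (rent c cy e1 e2 G γ m S t/(e1 ^ γ * G ^ (γ * (t:ℝ)))) /
        (price c cy e1 e2 G γ m S t/(e1*G^t)) ≤ Cb := fun t => hCb (Set.mem_range_self t)
    have hsum2 : Summable (fun t : ℕ => Cb * (e1 ^ (γ-1) * (G ^ (γ-1)) ^ (t+1))) := by
      have h := (summable_geometric_of_lt_one hρ0.le hρ1).mul_left
        (Cb * (e1 ^ (γ-1) * G ^ (γ-1)))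
      refine h.congr (fun t => ?_)
      rw [pow_succ]
      ring
    refine hsum2.of_nonneg_of_le (fun t => div_nonneg (hrent_pos _).le (hprice_pos _).le)
      (fun t => ?_)
    rw [hid (t+1)]
    exact mul_le_mul_of_nonneg_right (hCb' (t+1)) (hB_pos (t+1)).le
  exact ⟨⟨hs0, hs1⟩, hconc2, hconc3, hconc4, hconc5, hsum⟩
end
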